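/- arXiv:0711.1391 — 3 statements merged into one kernel-verified Lean document; each statement's English description precedes it below -/
import Mathlib

section
/- Let w be an element of a Coxeter group W with a fixed reduced expression w = w_1...w_k, and suppose that for every proper mask σ (i.e., σ ≠ (1,...,1)) one has D(σ) > 0. Then for every x ∈ W, the polynomial P_x(q) = Σ_{σ : w^σ = x} q^{d(σ)} has degree at most (l(w) − l(x) − 1)/2 whenever x < w in Bruhat order. -/
open CoxeterSystem Polynomial

variable {B W : Type*} [Group W] {M : CoxeterMatrix B}

namespace DeodharMu

noncomputable section

/-- The subword of `ω` selected by the positions where the mask `σ` is `true`. -/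
def maskedWord (ω : List B) (σ : List Bool) : List B :=
  ((ω.zip σ).filter (·.2)).map (·.1)

/-- The subword product `w^σ` determined by a mask `σ`. -/
def maskProd (cs : CoxeterSystem M W) (ω : List B) (σ : List Bool) : W :=
  cs.wordProd (maskedWord ω σ)

/-- Position `j` (0-indexed) of `ω` is a defect with respect to the mask `σ`:
multiplying the initial subword product `w^{σ[j-1]}` by the letter `ω_j` decreases length. -/
def IsDefect (cs : CoxeterSystem M W) (ω : List B) (σ : List Bool) (j : ℕ) : Prop :=
  cs.length (maskProd cs (ω.take (j + 1)) (σ.take j ++ [true])) <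
    cs.length (maskProd cs (ω.take j) (σ.take j))

instance (cs : CoxeterSystem M W) (ω : List B) (σ : List Bool) :
    DecidablePred (IsDefect cs ω σ) := fun _ => Nat.decLt _ _

/-- The number of defects `d(σ)`. -/
def defectCount (cs : CoxeterSystem M W) (ω : List B) (σ : List Bool) : ℕ :=
  ((Finset.range ω.length).filter (IsDefect cs ω σ)).card

/-- The number of zero-defects: positions with mask-value 0 that are defects. -/
def zeroDefectCount (cs : CoxeterSystem M W) (ω : List B) (σ : List Bool) : ℕ :=
  ((Finset.range ω.length).filter
    (fun j => σ.getD j true = false ∧ IsDefect cs ω σ j)).card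

/-- The number of plain-zeros: positions with mask-value 0 that are not defects. -/
def plainZeroCount (cs : CoxeterSystem M W) (ω : List B) (σ : List Bool) : ℕ :=
  ((Finset.range ω.length).filter
    (fun j => σ.getD j true = false ∧ ¬ IsDefect cs ω σ j)).card

/-- The Deodhar statistic `D(σ) = #plain-zeros − #zero-defects`. -/
def Dstat (cs : CoxeterSystem M W) (ω : List B) (σ : List Bool) : ℤ :=
  (plainZeroCount cs ω σ : ℤ) - zeroDefectCount cs ω σ

/-- A mask is proper if it is not the all-ones mask. -/
def IsProperMask (ω : List B) (σ : List Bool) : Prop :=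
  σ.length = ω.length ∧ σ ≠ List.replicate ω.length true

/-- A μ-mask: a proper mask with Deodhar statistic `D(σ) = 1`. -/
def IsMuMask (cs : CoxeterSystem M W) (ω : List B) (σ : List Bool) : Prop :=
  IsProperMask ω σ ∧ Dstat cs ω σ = 1

/-- A reduced word is Deodhar if every proper mask on it has positive Deodhar statistic. -/
def IsDeodharWord (cs : CoxeterSystem M W) (ω : List B) : Prop :=
  ∀ σ : List Bool, IsProperMask ω σ → 0 < Dstat cs ω σ

/-- An element is Deodhar if every reduced expression for it is a Deodhar word. -/
def IsDeodhar (cs : CoxeterSystem M W) (w : W) : Prop :=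
  ∀ ω : List B, cs.IsReduced ω → cs.wordProd ω = w → IsDeodharWord cs ω

/-- Bruhat order via the subword property: `x ≤ w` iff `x` is the product of a subword of
some (equivalently any) reduced expression for `w`. -/
def bruhatLE (cs : CoxeterSystem M W) (x w : W) : Prop :=
  ∃ (ω : List B) (σ : List Bool), cs.IsReduced ω ∧ cs.wordProd ω = w ∧
    σ.length = ω.length ∧ maskProd cs ω σ = x

/-- Strict Bruhat order. -/
def bruhatLT (cs : CoxeterSystem M W) (x w : W) : Prop :=
  bruhatLE cs x w ∧ x ≠ w

/-- The prototype polynomial `P_x(q) = Σ_{σ : w^σ = x} q^{d(σ)}`. -/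
def Ppoly [DecidableEq W] (cs : CoxeterSystem M W) (ω : List B) (x : W) : Polynomial ℤ :=
  ∑ m : Fin ω.length → Bool,
    if maskProd cs ω (List.ofFn m) = x then (Polynomial.X : Polynomial ℤ) ^ defectCount cs ω (List.ofFn m) else 0

/-- The μ-coefficient of a family `P` of polynomials: the coefficient of
`q^{(l(w)-l(x)-1)/2}`, taken to be zero when this exponent is not a nonnegative integer. -/
def mu (cs : CoxeterSystem M W) (P : W → W → Polynomial ℤ) (x w : W) : ℤ :=
  if cs.length x < cs.length w ∧ (cs.length w - cs.length x) % 2 = 1 then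
    (P x w).coeff ((cs.length w - cs.length x - 1) / 2)
  else 0

/-- A single commutation move: interchange two adjacent commuting generators. -/
def CommMove (M : CoxeterMatrix B) (ω ω' : List B) : Prop :=
  ∃ (l₁ l₂ : List B) (s t : B), M s t = 2 ∧ ω = l₁ ++ [s, t] ++ l₂ ∧ ω' = l₁ ++ [t, s] ++ l₂

/-- An element is fully commutative if any two of its reduced expressions are related
by a sequence of commutation moves. -/
def FullyCommutative (cs : CoxeterSystem M W) (w : W) : Prop :=
  ∀ ω ω' : List B, cs.IsReduced ω → cs.wordProd ω = w → cs.IsReduced ω' → cs.wordProd ω' = w →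
    Relation.ReflTransGen (CommMove M) ω ω'

/-- A word contains a short-braid: a consecutive factor `s t s` with `m(s,t) ≥ 3`. -/
def HasShortBraid (M : CoxeterMatrix B) (ω : List B) : Prop :=
  ∃ (l₁ l₂ : List B) (s t : B), 3 ≤ M s t ∧ ω = l₁ ++ [s, t, s] ++ l₂

/-- An element is short-braid avoiding if no reduced expression for it contains a
factor `s t s` with `s`, `t` non-commuting generators. -/
def ShortBraidAvoiding (cs : CoxeterSystem M W) (w : W) : Prop :=
  ∀ ω : List B, cs.IsReduced ω → cs.wordProd ω = w → ¬ HasShortBraid M ω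

/-- The heap partial order on positions of a word: the transitive closure of
`i ⋖ j` when `i < j` and the letters at `i` and `j` do not commute. -/
def HeapLT (cs : CoxeterSystem M W) (ω : List B) (i j : Fin ω.length) : Prop :=
  Relation.TransGen
    (fun i j : Fin ω.length => (i : ℕ) < (j : ℕ) ∧
      ¬ Commute (cs.simple (ω.get i)) (cs.simple (ω.get j))) i j

/-- Remove from a list the entries whose (0-indexed) positions lie in `J`. -/
def removeIdx {α : Type*} (l : List α) (J : Finset ℕ) : List α :=
  (((List.range l.length).zip l).filter (fun p => p.1 ∉ J)).map Prod.snd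

end

end DeodharMu



namespace DeodharMu

open List Finset

lemma maskedWord_concat (ω : List B) (σ : List Bool) (h : σ.length = ω.length) (i : B) (b : Bool) :
    maskedWord (ω ++ [i]) (σ ++ [b]) = maskedWord ω σ ++ if b then [i] else [] := by
  unfold maskedWord
  rw [List.zip_append h.symm, List.filter_append, List.map_append]
  cases b <;> simp

lemma maskProd_concat (cs : CoxeterSystem M W) (ω : List B) (σ : List Bool)
    (h : σ.length = ω.length) (i : B) (b : Bool) :
    maskProd cs (ω ++ [i]) (σ ++ [b]) = maskProd cs ω σ * if b then cs.simple i else 1 := by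
  unfold maskProd
  rw [maskedWord_concat ω σ h i b, cs.wordProd_append]
  cases b <;> simp

lemma isDefect_concat (cs : CoxeterSystem M W) (ω : List B) (σ : List Bool) (i : B) (b : Bool)
    (h : σ.length = ω.length) (j : ℕ) (hj : j < ω.length) :
    IsDefect cs (ω ++ [i]) (σ ++ [b]) j ↔ IsDefect cs ω σ j := by
  unfold IsDefect
  rw [List.take_append_of_le_length (by omega : j + 1 ≤ ω.length),
    List.take_append_of_le_length (by omega : j ≤ σ.length),
    List.take_append_of_le_length (by omega : j ≤ ω.length)]

lemma isDefect_concat_last (cs : CoxeterSystem M W) (ω : List B) (σ : List Bool)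
    (h : σ.length = ω.length) (i : B) (b : Bool) :
    IsDefect cs (ω ++ [i]) (σ ++ [b]) ω.length ↔
      cs.length (maskProd cs ω σ * cs.simple i) < cs.length (maskProd cs ω σ) := by
  unfold IsDefect
  have h1 : (ω ++ [i]).take (ω.length + 1) = ω ++ [i] := List.take_of_length_le (by simp)
  have h2 : (σ ++ [b]).take ω.length = σ := by
    rw [← h, List.take_append_of_le_length le_rfl, List.take_length]
  have h3 : (ω ++ [i]).take ω.length = ω := by
    rw [List.take_append_of_le_length le_rfl, List.take_length]
  rw [h1, h2, h3, maskProd_concat cs ω σ h i true]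
  simp

lemma card_filter_range_succ (p : ℕ → Prop) [DecidablePred p] (n : ℕ) :
    ((Finset.range (n + 1)).filter p).card =
      ((Finset.range n).filter p).card + if p n then 1 else 0 := by
  rw [Finset.range_add_one, Finset.filter_insert]
  split_ifs with hp
  · rw [Finset.card_insert_of_notMem (by simp), add_comm]
  · rw [add_zero]

lemma getD_concat_lt (σ : List Bool) (b : Bool) (j : ℕ) (hj : j < σ.length) :
    (σ ++ [b]).getD j true = σ.getD j true := by
  simp [List.getD, List.getElem?_append, hj]

lemma getD_concat_last (σ : List Bool) (b : Bool) :
    (σ ++ [b]).getD σ.length true = b := by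
  simp [List.getD]

lemma key_identity (cs : CoxeterSystem M W) : ∀ (ω : List B) (σ : List Bool),
    σ.length = ω.length →
    (ω.length : ℤ) + zeroDefectCount cs ω σ =
      cs.length (maskProd cs ω σ) + 2 * defectCount cs ω σ + plainZeroCount cs ω σ := by
  intro ω
  induction ω using List.reverseRecOn with
  | nil =>
    intro σ h
    have hσ : σ = [] := List.eq_nil_of_length_eq_zero h
    subst hσ
    simp [maskProd, maskedWord, defectCount, zeroDefectCount, plainZeroCount]
  | append_singleton ω i ih =>
    intro σ h
    rcases List.eq_nil_or_concat σ with rfl | ⟨σ', b, rfl⟩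
    · simp at h
    simp only [List.concat_eq_append] at h ⊢
    have h' : σ'.length = ω.length := by
      simp only [List.length_append, List.length_singleton] at h; omega
    have hlen : (ω ++ [i]).length = ω.length + 1 := by simp
    set u := maskProd cs ω σ' with hu
    have hDlast : IsDefect cs (ω ++ [i]) (σ' ++ [b]) ω.length ↔
        cs.length (u * cs.simple i) < cs.length u := isDefect_concat_last cs ω σ' h' i b
    have hgetlast : (σ' ++ [b]).getD ω.length true = b := by
      rw [← h']; exact getD_concat_last σ' b
    have hd : defectCount cs (ω ++ [i]) (σ' ++ [b]) =
        defectCount cs ω σ' +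
          if cs.length (u * cs.simple i) < cs.length u then 1 else 0 := by
      unfold defectCount
      rw [hlen, card_filter_range_succ]
      congr 1
      · congr 1
        refine Finset.filter_congr fun j hj => ?_
        exact isDefect_concat cs ω σ' i b h' j (Finset.mem_range.mp hj)
      · simp only [hDlast]
    have hz : zeroDefectCount cs (ω ++ [i]) (σ' ++ [b]) =
        zeroDefectCount cs ω σ' +
          if b = false ∧ cs.length (u * cs.simple i) < cs.length u then 1 else 0 := by
      unfold zeroDefectCount
      rw [hlen, card_filter_range_succ]
      congr 1
      · congr 1
        refine Finset.filter_congr fun j hj => ?_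
        have hj' : j < ω.length := Finset.mem_range.mp hj
        rw [isDefect_concat cs ω σ' i b h' j hj', getD_concat_lt σ' b j (by omega)]
      · simp only [hDlast, hgetlast]
    have hp : plainZeroCount cs (ω ++ [i]) (σ' ++ [b]) =
        plainZeroCount cs ω σ' +
          if b = false ∧ ¬ cs.length (u * cs.simple i) < cs.length u then 1 else 0 := by
      unfold plainZeroCount
      rw [hlen, card_filter_range_succ]
      congr 1
      · congr 1
        refine Finset.filter_congr fun j hj => ?_
        have hj' : j < ω.length := Finset.mem_range.mp hj
        rw [isDefect_concat cs ω σ' i b h' j hj', getD_concat_lt σ' b j (by omega)]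
      · simp only [hDlast, hgetlast]
    have hIH := ih σ' h'
    have hmul := maskProd_concat cs ω σ' h' i b
    rw [← hu] at hmul hIH
    cases b
    · simp only [if_neg (Bool.false_ne_true), mul_one] at hmul
      simp only [eq_self_iff_true, true_and] at hz hp
      by_cases hdf : cs.length (u * cs.simple i) < cs.length u
      · rw [if_pos hdf] at hd hz
        rw [if_neg (fun hc => hc hdf)] at hp
        rw [hlen, hmul, hd, hz, hp]
        push_cast
        omega
      · rw [if_neg hdf] at hd hz
        rw [if_pos hdf] at hp
        rw [hlen, hmul, hd, hz, hp]
        push_cast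
        omega
    · simp only [if_pos trivial] at hmul
      rw [if_neg (by simp)] at hz
      rw [if_neg (by simp)] at hp
      by_cases hdf : cs.length (u * cs.simple i) < cs.length u
      · rw [if_pos hdf] at hd
        have hlu : cs.length (u * cs.simple i) + 1 = cs.length u :=
          (cs.length_mul_simple u i).resolve_left (by omega)
        rw [hlen, hmul, hd, hz, hp]
        push_cast
        omega
      · rw [if_neg hdf] at hd
        have hlu : cs.length (u * cs.simple i) = cs.length u + 1 :=
          (cs.length_mul_simple u i).resolve_right (by omega)
        rw [hlen, hmul, hd, hz, hp]
        push_cast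
        omega

lemma maskedWord_replicate_true (ω : List B) :
    maskedWord ω (List.replicate ω.length true) = ω := by
  induction ω with
  | nil => rfl
  | cons a l ihl =>
    simp only [List.length_cons, List.replicate_succ, maskedWord, List.zip_cons_cons] at *
    simpa using ihl

end DeodharMu

open DeodharMu in
theorem stmt2 [DecidableEq W] (cs : CoxeterSystem M W) (ω : List B)
    (hred : cs.IsReduced ω)
    (hD : ∀ σ : List Bool, IsProperMask ω σ → 0 < Dstat cs ω σ) :
    ∀ x : W, bruhatLT cs x (cs.wordProd ω) →
      (Ppoly cs ω x).degree ≤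
        (((cs.length (cs.wordProd ω) - cs.length x - 1) / 2 : ℕ) : WithBot ℕ)  := by
  intro x hx
  unfold Ppoly
  refine le_trans (Polynomial.degree_sum_le _ _) (Finset.sup_le fun m _ => ?_)
  by_cases hm : maskProd cs ω (List.ofFn m) = x
  · rw [if_pos hm, Polynomial.degree_X_pow]
    have hlen : (List.ofFn m).length = ω.length := List.length_ofFn
    have hproper : IsProperMask ω (List.ofFn m) := by
      refine ⟨hlen, fun hrep => hx.2 ?_⟩
      rw [← hm, hrep]
      unfold maskProd
      rw [maskedWord_replicate_true]
    have hDs := hD _ hproper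
    have hkey := key_identity cs ω (List.ofFn m) hlen
    unfold Dstat at hDs
    rw [hm] at hkey
    have hlw : cs.length (cs.wordProd ω) = ω.length := hred
    have hnat : defectCount cs ω (List.ofFn m) ≤
        (cs.length (cs.wordProd ω) - cs.length x - 1) / 2 := by omega
    exact_mod_cast hnat
  · rw [if_neg hm, Polynomial.degree_zero]
    exact bot_le
end

section
/- Let w be a fully commutative element of a Coxeter group, i.e., any two reduced expressions for w are related by interchanging adjacent commuting generators. Then no reduced expression for w contains a factor s t s with s, t non-commuting generators (w is short-braid avoiding), provided no reduced expression for w contains such a factor after commutation moves; conversely, in a simply-laced Coxeter group (all bond orders are 2 or 3), w is fully commutative if and only if w is short-braid avoiding. -/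
open CoxeterSystem Polynomial

variable {B W : Type*} [Group W] {M : CoxeterMatrix B}

section SBDev
open CoxeterSystem List DeodharMu

namespace SB

variable {B W : Type*} [Group W] {M : CoxeterMatrix B} (cs : CoxeterSystem M W)

local prefix:100 "s" => cs.simple
local prefix:100 "π" => cs.wordProd
local prefix:100 "ℓ" => cs.length
local prefix:100 "ris" => cs.rightInvSeq

open Classical in
noncomputable def flipFun (i : B) : W × Bool → W × Bool :=
  fun p => (s i * p.1 * s i, if p.1 = s i then !p.2 else p.2)

lemma simple_conj_eq_iff (i : B) (w : W) : s i * w * s i = s i ↔ w = s i := by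
  constructor
  · intro h
    calc w = s i * (s i * w * s i) * s i := by
            calc w = (s i * s i) * w * (s i * s i) := by rw [cs.simple_mul_simple_self]; group
            _ = s i * (s i * w * s i) * s i := by group
    _ = s i * s i * s i := by rw [h]
    _ = s i := by rw [cs.simple_mul_simple_self, one_mul]
  · rintro rfl
    simp [cs.simple_mul_simple_self]

lemma flipFun_involutive (i : B) : Function.Involutive (flipFun cs i) := by
  intro p
  classical
  simp only [flipFun]
  obtain ⟨w, b⟩ := p
  by_cases h : w = s i
  · subst h
    simp [cs.simple_mul_simple_self, simple_conj_eq_iff]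
  · have h2 : ¬ (s i * w * s i = s i) := fun hc => h ((simple_conj_eq_iff cs i w).mp hc)
    simp only [if_neg h, if_neg h2, Prod.mk.injEq]
    refine ⟨?_, trivial⟩
    calc s i * (s i * w * s i) * s i = (s i * s i) * w * (s i * s i) := by group
    _ = w := by rw [cs.simple_mul_simple_self]; group

noncomputable def flip (i : B) : Equiv.Perm (W × Bool) :=
  (flipFun_involutive cs i).toPerm

lemma flip_apply (i : B) (p : W × Bool) : flip cs i p = flipFun cs i p := rfl

noncomputable def sgn (ω : List B) : Equiv.Perm (W × Bool) :=
  (ω.map (flip cs)).prod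

@[simp] lemma sgn_nil : sgn cs ([] : List B) = 1 := rfl

lemma sgn_cons (i : B) (ω : List B) : sgn cs (i :: ω) = flip cs i * sgn cs ω := by
  simp [sgn]

lemma sgn_append (ω ω' : List B) : sgn cs (ω ++ ω') = sgn cs ω * sgn cs ω' := by
  simp [sgn]

lemma rightInvSeq_cons (i : B) (ω : List B) :
    ris (i :: ω) = ((π ω)⁻¹ * s i * π ω) :: ris ω := rfl

lemma sgn_fst (ω : List B) (p : W × Bool) :
    (sgn cs ω p).1 = π ω * p.1 * (π ω)⁻¹ := by
  induction ω with
  | nil => simp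
  | cons i ω ih =>
    rw [sgn_cons]
    have : (flip cs i * sgn cs ω) p = flip cs i (sgn cs ω p) := rfl
    rw [this, flip_apply]
    simp only [flipFun, ih, cs.wordProd_cons, mul_inv_rev, cs.inv_simple]
    group

lemma sgn_snd_of_not_mem (ω : List B) (w : W) (b : Bool) (hw : w ∉ ris ω) :
    sgn cs ω (w, b) = (π ω * w * (π ω)⁻¹, b) := by
  induction ω with
  | nil => simp
  | cons i ω ih =>
    rw [rightInvSeq_cons, List.mem_cons] at hw
    push_neg at hw
    rw [sgn_cons]
    have h1 : (flip cs i * sgn cs ω) (w, b) = flip cs i (sgn cs ω (w, b)) := rfl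
    rw [h1, ih hw.2, flip_apply]
    have hne : π ω * w * (π ω)⁻¹ ≠ s i := by
      intro hc
      apply hw.1
      rw [← hc]; group
    simp only [flipFun, if_neg hne, cs.wordProd_cons, mul_inv_rev, cs.inv_simple]
    group

lemma drop_alternatingWord (i i' : B) (j n : ℕ) :
    (alternatingWord i i' n).drop j = alternatingWord i i' (n - j) := by
  induction j generalizing n with
  | zero => simp
  | succ j ih =>
    cases n with
    | zero => simp [alternatingWord]
    | succ n =>
      rw [alternatingWord_succ' i i' n, List.drop_succ_cons, ih n]
      congr 1
      omega

lemma simple_semiconj (i i' : B) (e : ℕ) :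
    s i * (s i' * s i) ^ e = (s i * s i') ^ e * s i := by
  have h : SemiconjBy (s i) (s i' * s i) (s i * s i') := by
    unfold SemiconjBy; group
  exact (h.pow_right e).eq

lemma inv_pow_simple (i i' : B) (e : ℕ) :
    ((s i' * s i) ^ e)⁻¹ = (s i * s i') ^ e := by
  rw [← inv_pow]
  congr 1
  rw [mul_inv_rev, cs.inv_simple, cs.inv_simple]

lemma dihedral_entry (i i' : B) (j : ℕ) :
    (π (alternatingWord i' i (j + 1)))⁻¹ * π (alternatingWord i' i j)
      = (s i * s i') ^ j * s i := by
  rcases Nat.even_or_odd j with ⟨e, rfl⟩ | ⟨e, rfl⟩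
  · have h1 : π (alternatingWord i' i (e + e)) = (s i' * s i) ^ e := by
      rw [cs.prod_alternatingWord_eq_mul_pow]
      simp [Nat.even_add, (by omega : (e + e) / 2 = e)]
    have h2 : π (alternatingWord i' i (e + e + 1)) = s i * (s i' * s i) ^ e := by
      rw [cs.prod_alternatingWord_eq_mul_pow]
      have : ¬ Even (e + e + 1) := by simp [Nat.even_add_one, Nat.even_add]
      simp [this, (by omega : (e + e + 1) / 2 = e)]
    rw [h1, h2, mul_inv_rev, cs.inv_simple, inv_pow_simple cs, mul_assoc,
      simple_semiconj cs, ← mul_assoc, ← pow_add]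
  · have h1 : π (alternatingWord i' i (2 * e + 1)) = s i * (s i' * s i) ^ e := by
      rw [cs.prod_alternatingWord_eq_mul_pow]
      have : ¬ Even (2 * e + 1) := by simp [Nat.even_add_one]
      simp [this, (by omega : (2 * e + 1) / 2 = e)]
    have h2 : π (alternatingWord i' i (2 * e + 1 + 1)) = (s i' * s i) ^ (e + 1) := by
      rw [cs.prod_alternatingWord_eq_mul_pow]
      have he : Even (2 * e + 1 + 1) := ⟨e + 1, by omega⟩
      rw [if_pos he, one_mul, (by omega : (2 * e + 1 + 1) / 2 = e + 1)]
    rw [h1, h2, inv_pow_simple cs, simple_semiconj cs, ← mul_assoc, ← pow_add]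
    congr 2
    omega

lemma get?_alternatingWord (i i' : B) (n j : ℕ) (hj : j < n) :
    (alternatingWord i i' n)[j]? = some (if Even (n - j - 1) then i' else i) := by
  have h0 : (alternatingWord i i' n)[j]? = ((alternatingWord i i' n).drop j)[0]? := by
    rw [List.getElem?_drop]
    norm_num
  rw [h0, drop_alternatingWord]
  obtain ⟨k, hk⟩ : ∃ k, n - j = k + 1 := ⟨n - j - 1, by omega⟩
  rw [hk, alternatingWord_succ']
  simp [show n - j - 1 = k by omega]

lemma getD_ris_alt (i i' : B) (n j : ℕ) (hj : j < n) :
    (ris (alternatingWord i i' n)).getD j 1 =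
      (π (alternatingWord i i' (n - j - 1)))⁻¹ * π (alternatingWord i i' (n - j)) := by
  rw [cs.getD_rightInvSeq, drop_alternatingWord, get?_alternatingWord i i' n j hj]
  obtain ⟨k, hk⟩ : ∃ k, n - j = k + 1 := ⟨n - j - 1, by omega⟩
  rw [show n - (j + 1) = k by omega, show n - j - 1 = k by omega, hk,
    alternatingWord_succ', cs.wordProd_cons]
  simp only [Option.map_some, Option.getD_some]
  rw [mul_assoc]

lemma getD_ris_alt_eq (i i' : B) (j : ℕ) (hj : j < 2 * M i i') :
    (ris (alternatingWord i i' (2 * M i i'))).getD j 1 = (s i * s i') ^ j * s i := by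
  rw [getD_ris_alt cs i i' _ j hj]
  have e1 : π (alternatingWord i i' (2 * M i i' - j)) = π (alternatingWord i' i j) := by
    have h := cs.prod_alternatingWord_eq_prod_alternatingWord_sub i i' (2 * M i i' - j)
      (by omega)
    rwa [show M i i' * 2 - (2 * M i i' - j) = j from by omega] at h
  have e2 : π (alternatingWord i i' (2 * M i i' - j - 1)) = π (alternatingWord i' i (j + 1)) := by
    have h := cs.prod_alternatingWord_eq_prod_alternatingWord_sub i i' (2 * M i i' - j - 1)
      (by omega)
    rwa [show M i i' * 2 - (2 * M i i' - j - 1) = j + 1 from by omega] at h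
  rw [e1, e2, dihedral_entry cs]

lemma ris_alt_eq_map (i i' : B) :
    ris (alternatingWord i i' (2 * M i i')) =
      (List.range (2 * M i i')).map (fun j => (s i * s i') ^ j * s i) := by
  apply List.ext_getElem
  · simp
  · intro j h1 h2
    have hj : j < 2 * M i i' := by simpa using h2
    rw [← List.getD_eq_getElem _ 1, getD_ris_alt_eq cs i i' j hj]
    simp

lemma sgn_apply [DecidableEq W] (ω : List B) (w : W) (b : Bool) :
    sgn cs ω (w, b) =
      (π ω * w * (π ω)⁻¹, if Even ((ris ω).count w) then b else !b) := by
  induction ω with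
  | nil => simp
  | cons i ω ih =>
    rw [sgn_cons]
    have h1 : (flip cs i * sgn cs ω) (w, b) = flip cs i (sgn cs ω (w, b)) := rfl
    rw [h1, ih, flip_apply]
    have hcnt : (ris (i :: ω)).count w =
        (ris ω).count w + (if (π ω)⁻¹ * s i * π ω = w then 1 else 0) := by
      rw [rightInvSeq_cons, List.count_cons]
      simp
    have hcond : (π ω * w * (π ω)⁻¹ = s i) ↔ ((π ω)⁻¹ * s i * π ω = w) := by
      constructor
      · intro hc
        rw [← hc]; group
      · intro hc
        rw [← hc]; group
    simp only [flipFun]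
    have hfst : s i * (π ω * w * (π ω)⁻¹) * s i = π (i :: ω) * w * (π (i :: ω))⁻¹ := by
      rw [cs.wordProd_cons, mul_inv_rev, cs.inv_simple]
      group
    by_cases hc : (π ω)⁻¹ * s i * π ω = w
    · rw [if_pos (hcond.mpr hc), hcnt, if_pos hc]
      rw [Prod.ext_iff]
      refine ⟨hfst, ?_⟩
      simp only [Nat.even_add_one]
      by_cases hev : Even ((ris ω).count w) <;> simp [hev]
    · rw [if_neg (fun hcc => hc (hcond.mp hcc)), hcnt, if_neg hc, add_zero]
      rw [Prod.ext_iff]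
      exact ⟨hfst, rfl⟩

lemma sgn_alt_pow (i i' : B) (m : ℕ) :
    (flip cs i * flip cs i') ^ m = sgn cs (alternatingWord i i' (2 * m)) := by
  induction m with
  | zero => simp [sgn, alternatingWord]
  | succ m ih =>
    have halt : alternatingWord i i' (2 * (m + 1)) = i :: i' :: alternatingWord i i' (2 * m) := by
      rw [show 2 * (m + 1) = (2 * m + 1) + 1 from by ring, alternatingWord_succ',
        alternatingWord_succ']
      have h1 : ¬ Even (2 * m + 1) := by simp [Nat.even_add_one]
      have h2 : Even (2 * m) := ⟨m, by ring⟩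
      rw [if_neg h1, if_pos h2]
    rw [halt, sgn_cons, sgn_cons, ← ih, pow_succ', mul_assoc]

lemma flip_liftable : M.IsLiftable (flip cs) := by
  intro i i'
  classical
  rw [sgn_alt_pow]
  apply Equiv.ext
  rintro ⟨w, b⟩
  have hπ : π (alternatingWord i i' (2 * M i i')) = 1 := by
    rw [cs.prod_alternatingWord_eq_mul_pow]
    have he : Even (2 * M i i') := ⟨M i i', by ring⟩
    rw [if_pos he, one_mul, (by omega : 2 * M i i' / 2 = M i i'), cs.simple_mul_simple_pow]
  have hcount : Even ((ris (alternatingWord i i' (2 * M i i'))).count w) := by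
    rw [ris_alt_eq_map cs, show 2 * M i i' = M i i' + M i i' from by ring, List.range_add,
      List.map_append, List.count_append]
    have hmm : (List.map (fun j => (s i * s i') ^ j * s i)
          (List.map (fun j => M i i' + j) (List.range (M i i')))) =
        List.map (fun j => (s i * s i') ^ j * s i) (List.range (M i i')) := by
      rw [List.map_map]
      apply List.map_congr_left
      intro j hj
      simp only [Function.comp_apply]
      rw [pow_add, cs.simple_mul_simple_pow, one_mul]
    rw [hmm]
    exact ⟨_, rfl⟩
  rw [sgn_apply, hπ, if_pos hcount]
  simp

noncomputable def sgnHom : W →* Equiv.Perm (W × Bool) := cs.lift ⟨flip cs, flip_liftable cs⟩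

lemma sgnHom_wordProd (ω : List B) : sgnHom cs (π ω) = sgn cs ω := by
  induction ω with
  | nil => simp [sgn]
  | cons i ω ih =>
    rw [cs.wordProd_cons, map_mul, ih, sgn_cons]
    congr 1
    exact cs.lift_apply_simple (flip_liftable cs) i

theorem right_exchange {ω : List B} (hω : cs.IsReduced ω) {i : B}
    (h : ℓ (π ω * s i) < ℓ (π ω)) : s i ∈ ris ω := by
  by_contra hmem
  obtain ⟨τ, hτlen, hτ⟩ := cs.exists_reduced_word (π ω * s i)
  have hτred : cs.IsReduced τ := by
    exact hτlen
  have hsimp : π ω * s i * s i = π ω := by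
    rw [mul_assoc, cs.simple_mul_simple_self, mul_one]
  have hprod : π (τ ++ [i]) = π ω := by
    rw [cs.wordProd_append, ← hτ, cs.wordProd_singleton, hsimp]
  have hnotmemτ : s i ∉ ris τ := by
    intro hc
    obtain ⟨-, hlt⟩ := cs.isRightInversion_of_mem_rightInvSeq hτred hc
    rw [← hτ, hsimp] at hlt
    omega
  have h1 : sgn cs ω (s i, false) = (π ω * s i * (π ω)⁻¹, false) :=
    sgn_snd_of_not_mem cs ω (s i) false hmem
  have h2 : sgn cs (τ ++ [i]) (s i, false) = (π (τ ++ [i]) * s i * (π (τ ++ [i]))⁻¹, true) := by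
    rw [sgn_append]
    have e0 : (sgn cs τ * sgn cs [i]) (s i, false) = sgn cs τ (sgn cs [i] (s i, false)) := rfl
    have e1 : sgn cs [i] (s i, false) = (s i, true) := by
      have : sgn cs [i] = flip cs i := by simp [sgn]
      rw [this, flip_apply]
      simp only [flipFun, if_pos rfl, Bool.not_false]
      rw [Prod.ext_iff]
      constructor
      · rw [cs.simple_mul_simple_self, one_mul]
      · rfl
    rw [e0, e1, sgn_snd_of_not_mem cs τ (s i) true hnotmemτ]
    have hfst : π (τ ++ [i]) * s i * (π (τ ++ [i]))⁻¹ = π τ * s i * (π τ)⁻¹ := by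
      rw [cs.wordProd_append, cs.wordProd_singleton, mul_inv_rev, cs.inv_simple,
        CoxeterSystem.simple_mul_simple_cancel_right, mul_assoc]
    rw [hfst]
  have hEq : sgn cs ω = sgn cs (τ ++ [i]) := by
    rw [← sgnHom_wordProd, ← sgnHom_wordProd, hprod]
  rw [hEq, h2] at h1
  have := congrArg Prod.snd h1
  simp at this

open Classical in
noncomputable def amat (M : CoxeterMatrix B) : B → B → ℤ :=
  fun a b => if a = b then 2 else if M a b = 2 then 0 else -1

lemma amat_same (a : B) : amat M a a = 2 := by simp [amat]

lemma amat_two {a b : B} (hab : a ≠ b) (h : M a b = 2) : amat M a b = 0 := by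
  simp [amat, hab, h]

lemma amat_three {a b : B} (hab : a ≠ b) (h : M a b = 3) : amat M a b = -1 := by
  simp [amat, hab, h]

noncomputable def pr (M : CoxeterMatrix B) (a : B) : (B →₀ ℤ) →+ ℤ :=
  Finsupp.liftAddHom (fun c => AddMonoidHom.mulRight (amat M c a))

lemma pr_single (a c : B) (n : ℤ) : pr M a (Finsupp.single c n) = n * amat M c a := by
  simp [pr]

noncomputable def reflFun (M : CoxeterMatrix B) (a : B) : (B →₀ ℤ) → (B →₀ ℤ) :=
  fun x => x - Finsupp.single a (pr M a x)

lemma reflFun_involutive (a : B) : Function.Involutive (reflFun M a) := by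
  intro x
  unfold reflFun
  have h1 : pr M a (x - Finsupp.single a (pr M a x)) = - pr M a x := by
    rw [map_sub, pr_single, amat_same]
    ring
  rw [h1]
  have h2 : Finsupp.single a (- pr M a x) = - Finsupp.single a (pr M a x) := by
    rw [Finsupp.single_neg]
  rw [h2]
  abel

noncomputable def grefl (M : CoxeterMatrix B) (a : B) : Equiv.Perm (B →₀ ℤ) :=
  (reflFun_involutive (M := M) a).toPerm

lemma grefl_apply (a : B) (x : B →₀ ℤ) :
    grefl M a x = x - Finsupp.single a (pr M a x) := rfl

lemma grefl_liftable (hSL : ∀ a b : B, a ≠ b → M a b = 2 ∨ M a b = 3) :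
    M.IsLiftable (grefl M) := by
  intro a b
  by_cases hab : a = b
  · subst hab
    rw [M.diagonal, pow_one]
    apply Equiv.ext
    intro x
    have : (grefl M a * grefl M a) x = grefl M a (grefl M a x) := rfl
    rw [this]
    exact reflFun_involutive (M := M) a x
  · have hba : b ≠ a := fun h => hab h.symm
    set P := pr M a with hP
    set Q := pr M b with hQ
    rcases hSL a b hab with h2 | h3
    · have c1 : amat M a b = 0 := amat_two hab h2
      have c2 : amat M b a = 0 := amat_two hba (by rw [M.symmetric b a]; exact h2)
      rw [h2]
      apply Equiv.ext
      intro x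
      have hx : ((grefl M a * grefl M b) ^ 2) x =
          grefl M a (grefl M b (grefl M a (grefl M b x))) := by
        rw [pow_two]
        rfl
      rw [hx]
      have e1 : grefl M b x = x - Finsupp.single b (Q x) := rfl
      have p2 : pr M a (x - Finsupp.single b (Q x)) = P x := by
        rw [map_sub, pr_single, c2]; ring
      have e2 : grefl M a (x - Finsupp.single b (Q x)) =
          x - Finsupp.single b (Q x) - Finsupp.single a (P x) := by
        rw [grefl_apply, p2]
      have p3 : pr M b (x - Finsupp.single b (Q x) - Finsupp.single a (P x)) = - Q x := by
        rw [map_sub, map_sub, pr_single, pr_single, amat_same, c1]; ring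
      have e3 : grefl M b (x - Finsupp.single b (Q x) - Finsupp.single a (P x)) =
          x - Finsupp.single b (Q x) - Finsupp.single a (P x)
            - Finsupp.single b (- Q x) := by
        rw [grefl_apply, p3]
      have p4 : pr M a (x - Finsupp.single b (Q x) - Finsupp.single a (P x)
            - Finsupp.single b (- Q x)) = - P x := by
        rw [map_sub, map_sub, map_sub, pr_single, pr_single, pr_single, amat_same, c2]; ring
      have e4 : grefl M a (x - Finsupp.single b (Q x) - Finsupp.single a (P x)
            - Finsupp.single b (- Q x)) =
          x - Finsupp.single b (Q x) - Finsupp.single a (P x)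
            - Finsupp.single b (- Q x) - Finsupp.single a (- P x) := by
        rw [grefl_apply, p4]
      rw [e1, e2, e3, e4, Finsupp.single_neg, Finsupp.single_neg]
      have : (1 : Equiv.Perm (B →₀ ℤ)) x = x := rfl
      rw [this]
      abel
    · have c1 : amat M a b = -1 := amat_three hab h3
      have c2 : amat M b a = -1 := amat_three hba (by rw [M.symmetric b a]; exact h3)
      rw [h3]
      apply Equiv.ext
      intro x
      have hx : ((grefl M a * grefl M b) ^ 3) x =
          grefl M a (grefl M b (grefl M a (grefl M b (grefl M a (grefl M b x))))) := by
        rw [pow_succ, pow_two]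
        rfl
      rw [hx]
      set v1 := x - Finsupp.single b (Q x) with hv1
      have e1 : grefl M b x = v1 := rfl
      have p2 : pr M a v1 = P x + Q x := by
        rw [hv1, map_sub, pr_single, c2]; ring
      set v2 := v1 - Finsupp.single a (P x + Q x) with hv2
      have e2 : grefl M a v1 = v2 := by rw [grefl_apply, p2]
      have p3 : pr M b v2 = P x := by
        rw [hv2, hv1, map_sub, map_sub, pr_single, pr_single, amat_same, c1]; ring
      set v3 := v2 - Finsupp.single b (P x) with hv3
      have e3 : grefl M b v2 = v3 := by rw [grefl_apply, p3]
      have p4 : pr M a v3 = - Q x := by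
        rw [hv3, hv2, hv1, map_sub, map_sub, map_sub, pr_single, pr_single, pr_single,
          amat_same, c2]; ring
      set v4 := v3 - Finsupp.single a (- Q x) with hv4
      have e4 : grefl M a v3 = v4 := by rw [grefl_apply, p4]
      have p5 : pr M b v4 = - P x - Q x := by
        rw [hv4, hv3, hv2, hv1, map_sub, map_sub, map_sub, map_sub, pr_single, pr_single,
          pr_single, pr_single, amat_same, c1]; ring
      set v5 := v4 - Finsupp.single b (- P x - Q x) with hv5
      have e5 : grefl M b v4 = v5 := by rw [grefl_apply, p5]
      have p6 : pr M a v5 = - P x := by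
        rw [hv5, hv4, hv3, hv2, hv1, map_sub, map_sub, map_sub, map_sub, map_sub, pr_single,
          pr_single, pr_single, pr_single, pr_single, amat_same, c2]; ring
      have e6 : grefl M a v5 = v5 - Finsupp.single a (- P x) := by rw [grefl_apply, p6]
      rw [e1, e2, e3, e4, e5, e6, hv5, hv4, hv3, hv2, hv1]
      have h1 : (1 : Equiv.Perm (B →₀ ℤ)) x = x := rfl
      rw [h1, Finsupp.single_neg, Finsupp.single_neg]
      have hsplit : Finsupp.single b (- P x - Q x) =
          - Finsupp.single b (P x) - Finsupp.single b (Q x) := by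
        rw [show - P x - Q x = -(P x) + -(Q x) from by ring, Finsupp.single_add,
          Finsupp.single_neg, Finsupp.single_neg]
        abel
      rw [hsplit]
      have hsplit2 : Finsupp.single a (P x + Q x) =
          Finsupp.single a (P x) + Finsupp.single a (Q x) := Finsupp.single_add a _ _
      rw [hsplit2]
      abel

section SimplyLaced

variable (hSL : ∀ a b : B, a ≠ b → M a b = 2 ∨ M a b = 3)

include hSL

lemma simple_ne {a b : B} (hab : a ≠ b) : s a ≠ s b := by
  classical
  intro h
  have hlift := congrArg (cs.lift ⟨grefl M, grefl_liftable hSL⟩) h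
  rw [cs.lift_apply_simple, cs.lift_apply_simple] at hlift
  have happ := DFunLike.congr_fun hlift (Finsupp.single a 1)
  have hL : grefl M a (Finsupp.single a 1) = Finsupp.single a (-1) := by
    rw [grefl_apply, pr_single, amat_same, show (1 : ℤ) * 2 = 2 from by ring,
      show (-1 : ℤ) = 1 - 2 from by ring, Finsupp.single_sub]
  have hR : grefl M b (Finsupp.single a 1) =
      Finsupp.single a 1 - Finsupp.single b (amat M a b) := by
    rw [grefl_apply, pr_single, one_mul]
  rw [hL, hR] at happ
  have hcoeff := DFunLike.congr_fun happ a
  have hba : b ≠ a := fun hx => hab hx.symm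
  simp [Finsupp.single_apply, hba] at hcoeff

lemma braid_ne {a b : B} (hab : a ≠ b) (h3 : M a b = 3) : s a * s b * s a ≠ s b := by
  have hba : b ≠ a := fun h => hab h.symm
  have c1 : amat M a b = -1 := amat_three hab h3
  have c2 : amat M b a = -1 := amat_three hba (by rw [M.symmetric b a]; exact h3)
  intro h
  classical
  have hlift := congrArg (cs.lift ⟨grefl M, grefl_liftable hSL⟩) h
  simp only [map_mul, cs.lift_apply_simple] at hlift
  have happ := DFunLike.congr_fun hlift (Finsupp.single b 1)
  have hmul : (grefl M a * grefl M b * grefl M a) (Finsupp.single b 1) =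
      grefl M a (grefl M b (grefl M a (Finsupp.single b 1))) := rfl
  rw [hmul] at happ
  have hL1 : grefl M a (Finsupp.single b 1) =
      Finsupp.single b 1 + Finsupp.single a 1 := by
    rw [grefl_apply, pr_single, c2]
    rw [show (1 : ℤ) * -1 = -1 from by ring, Finsupp.single_neg]
    abel
  have hL2 : grefl M b (Finsupp.single b 1 + Finsupp.single a 1) = Finsupp.single a 1 := by
    rw [grefl_apply, map_add, pr_single, pr_single, amat_same, c1]
    rw [show (1 : ℤ) * 2 + 1 * -1 = 1 from by ring]
    abel
  have hL3 : grefl M a (Finsupp.single a 1) = Finsupp.single a (-1) := by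
    rw [grefl_apply, pr_single, amat_same, show (1 : ℤ) * 2 = 2 from by ring,
      show (-1 : ℤ) = 1 - 2 from by ring, Finsupp.single_sub]
  rw [hL1, hL2, hL3] at happ
  have hR : grefl M b (Finsupp.single b 1) = Finsupp.single b (-1) := by
    rw [grefl_apply, pr_single, amat_same, show (1 : ℤ) * 2 = 2 from by ring,
      show (-1 : ℤ) = 1 - 2 from by ring, Finsupp.single_sub]
  rw [hR] at happ
  have hcoeff := DFunLike.congr_fun happ b
  simp [Finsupp.single_apply, hab] at hcoeff

end SimplyLaced

lemma rightInvSeq_append (ω₁ ω₂ : List B) :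
    ris (ω₁ ++ ω₂) = (ris ω₁).map (fun t => (π ω₂)⁻¹ * t * π ω₂) ++ ris ω₂ := by
  induction ω₁ with
  | nil => simp
  | cons i ω₁ ih =>
    rw [List.cons_append, rightInvSeq_cons, rightInvSeq_cons, ih, List.map_cons,
      List.cons_append]
    congr 1
    rw [cs.wordProd_append, mul_inv_rev]
    group

lemma length_sub_one_of_descent {w : W} {i : B} (h : ℓ (w * s i) < ℓ w) :
    ℓ (w * s i) = ℓ w - 1 ∧ 1 ≤ ℓ w := by
  rcases cs.length_mul_simple w i with heq | heq <;> omega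

section SimplyLaced2

variable (hSL : ∀ a b : B, a ≠ b → M a b = 2 ∨ M a b = 3)

include hSL

lemma exists_reduced_word_ending_pair {w : W} {i i' : B} (hii' : i ≠ i')
    (hi : ℓ (w * s i) < ℓ w) (hi' : ℓ (w * s i') < ℓ w) :
    ∃ ε : List B, cs.IsReduced (ε ++ [i', i]) ∧ π (ε ++ [i', i]) = w ∧
      ε.length + 2 = ℓ w := by
  obtain ⟨hlen', hpos'⟩ := length_sub_one_of_descent cs hi'
  obtain ⟨δ, hδlen, hδ⟩ := cs.exists_reduced_word (w * s i')
  have hw : π (δ ++ [i']) = w := by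
    rw [cs.wordProd_append, cs.wordProd_singleton, ← hδ,
      CoxeterSystem.simple_mul_simple_cancel_right]
  have h' : ℓ (w * s i') = δ.length := by rw [hδ]; exact hδlen
  have hlenδi : (δ ++ [i']).length = ℓ w := by
    simp
    omega
  have hred : cs.IsReduced (δ ++ [i']) := by
    rw [CoxeterSystem.IsReduced, hw, hlenδi]
  have hmem : s i ∈ ris (δ ++ [i']) := by
    apply right_exchange cs hred
    rw [hw]
    exact hi
  rw [rightInvSeq_append] at hmem
  rcases List.mem_append.mp hmem with hmem | hmem
  · obtain ⟨t, ht, htt⟩ := List.mem_map.mp hmem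
    rw [cs.wordProd_singleton, cs.inv_simple] at htt
    have h5 : s i' * (s i' * t * s i') * s i' = t := by
      simp only [← mul_assoc]
      rw [CoxeterSystem.simple_mul_simple_cancel_right, cs.simple_mul_simple_self, one_mul]
    have htval : t = s i' * s i * s i' := by
      rw [← htt]
      exact h5.symm
    obtain ⟨j, hj, hgetelem⟩ := List.mem_iff_getElem.mp ht
    have hgetd : (ris δ).getD j 1 = t := by
      rw [List.getD_eq_getElem _ 1 hj, hgetelem]
    have herase : π (δ.eraseIdx j) = w * s i * s i' := by
      rw [← cs.wordProd_mul_getD_rightInvSeq, hgetd, htval, ← hδ]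
      simp only [← mul_assoc]
      rw [CoxeterSystem.simple_mul_simple_cancel_right]
    have hjlen : j < δ.length := by
      rw [← cs.length_rightInvSeq δ]; exact hj
    have hεlen : (δ.eraseIdx j).length = ℓ w - 2 := by
      have := List.length_eraseIdx_add_one hjlen
      omega
    have hwrec : π (δ.eraseIdx j) * s i' * s i = w := by
      rw [herase, CoxeterSystem.simple_mul_simple_cancel_right,
        CoxeterSystem.simple_mul_simple_cancel_right]
    have hup : ℓ (π (δ.eraseIdx j)) ≤ ℓ w - 2 := by
      calc ℓ (π (δ.eraseIdx j)) ≤ (δ.eraseIdx j).length := cs.length_wordProd_le _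
      _ = ℓ w - 2 := hεlen
    have hlow : ℓ w ≤ ℓ (π (δ.eraseIdx j)) + 2 := by
      calc ℓ w = ℓ (π (δ.eraseIdx j) * s i' * s i) := by rw [hwrec]
      _ ≤ ℓ (π (δ.eraseIdx j) * s i') + ℓ (s i) := cs.length_mul_le _ _
      _ ≤ ℓ (π (δ.eraseIdx j)) + ℓ (s i') + ℓ (s i) := by
          have := cs.length_mul_le (π (δ.eraseIdx j)) (s i')
          omega
      _ = ℓ (π (δ.eraseIdx j)) + 2 := by rw [cs.length_simple, cs.length_simple]
    have hπfull : π (δ.eraseIdx j ++ [i', i]) = w := by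
      rw [cs.wordProd_append, cs.wordProd_cons, cs.wordProd_singleton, ← mul_assoc]
      exact hwrec
    have hw2 : 2 ≤ ℓ w := by omega
    refine ⟨δ.eraseIdx j, ?_, hπfull, by omega⟩
    rw [CoxeterSystem.IsReduced, hπfull]
    simp [hεlen]
    omega
  · rw [CoxeterSystem.rightInvSeq_singleton, List.mem_singleton] at hmem
    exact absurd hmem (simple_ne cs hSL hii')

lemma exists_reduced_word_ending_braid {w : W} {i i' : B} (hii' : i ≠ i') (h3 : M i i' = 3)
    (hi : ℓ (w * s i) < ℓ w) (hi' : ℓ (w * s i') < ℓ w) :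
    ∃ ε : List B, cs.IsReduced (ε ++ [i, i', i]) ∧ π (ε ++ [i, i', i]) = w := by
  obtain ⟨ε₁, hred1, hprod1, hlen1⟩ := exists_reduced_word_ending_pair cs hSL hii' hi hi'
  have hmem : s i' ∈ ris (ε₁ ++ [i', i]) := by
    apply right_exchange cs hred1
    rw [hprod1]
    exact hi'
  have hπε₁ : π ε₁ = w * s i * s i' := by
    have h0 : π ε₁ * (s i' * s i) = w := by
      rw [← hprod1, cs.wordProd_append, cs.wordProd_cons, cs.wordProd_singleton]
    have h1 : π ε₁ = w * (s i' * s i)⁻¹ := by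
      rw [← h0]
      group
    rw [h1, mul_inv_rev, cs.inv_simple, cs.inv_simple, ← mul_assoc]
  have hpow3 : (s i' * s i) ^ 3 = s i' * s i * (s i' * s i) * (s i' * s i) := by
    rw [show (3 : ℕ) = 2 + 1 from rfl, pow_succ, pow_two]
  have hpow : (s i' * s i) ^ 3 = 1 := by
    rw [← h3]
    exact cs.simple_mul_simple_pow' i i'
  rw [rightInvSeq_append] at hmem
  rcases List.mem_append.mp hmem with hmem | hmem
  · obtain ⟨t, ht, htt⟩ := List.mem_map.mp hmem
    have hpii : π [i', i] = s i' * s i := by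
      rw [cs.wordProd_cons, cs.wordProd_singleton]
    rw [hpii] at htt
    have htval : t = s i' * s i * s i' * s i * s i' := by
      set a := s i' * s i with ha
      have h6 : t = a * s i' * a⁻¹ := by
        rw [← htt]
        group
      rw [h6, ha, mul_inv_rev, cs.inv_simple, cs.inv_simple]
      simp only [← mul_assoc]
    obtain ⟨j, hj, hgetelem⟩ := List.mem_iff_getElem.mp ht
    have hgetd : (ris ε₁).getD j 1 = t := by
      rw [List.getD_eq_getElem _ 1 hj, hgetelem]
    have herase : π (ε₁.eraseIdx j) = w * s i' * s i * s i' := by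
      rw [← cs.wordProd_mul_getD_rightInvSeq, hgetd, htval, hπε₁]
      simp only [← mul_assoc]
      rw [CoxeterSystem.simple_mul_simple_cancel_right,
        CoxeterSystem.simple_mul_simple_cancel_right]
    have hjlen : j < ε₁.length := by
      rw [← cs.length_rightInvSeq ε₁]
      exact hj
    have hεlen : (ε₁.eraseIdx j).length = ℓ w - 3 := by
      have := List.length_eraseIdx_add_one hjlen
      omega
    have hwrec : π (ε₁.eraseIdx j) * s i * s i' * s i = w := by
      rw [herase]
      have hh : w * s i' * s i * s i' * s i * s i' * s i = w * ((s i' * s i) ^ 3) := by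
        rw [hpow3]
        simp only [← mul_assoc]
      rw [hh, hpow, mul_one]
    have hup : ℓ (π (ε₁.eraseIdx j)) ≤ ℓ w - 3 := by
      calc ℓ (π (ε₁.eraseIdx j)) ≤ (ε₁.eraseIdx j).length := cs.length_wordProd_le _
      _ = ℓ w - 3 := hεlen
    have hlow : ℓ w ≤ ℓ (π (ε₁.eraseIdx j)) + 3 := by
      have s1 := cs.length_mul_le (π (ε₁.eraseIdx j) * s i * s i') (s i)
      have s2 := cs.length_mul_le (π (ε₁.eraseIdx j) * s i) (s i')
      have s3 := cs.length_mul_le (π (ε₁.eraseIdx j)) (s i)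
      rw [hwrec] at s1
      rw [cs.length_simple] at s1 s2 s3
      omega
    have hπfull : π (ε₁.eraseIdx j ++ [i, i', i]) = w := by
      rw [cs.wordProd_append, cs.wordProd_cons, cs.wordProd_cons, cs.wordProd_singleton]
      simp only [← mul_assoc]
      exact hwrec
    refine ⟨ε₁.eraseIdx j, ?_, hπfull⟩
    rw [CoxeterSystem.IsReduced, hπfull]
    simp only [List.length_append, List.length_cons, List.length_nil, hεlen]
    omega
  · have hris : ris [i', i] = [s i * s i' * s i, s i] := by
      rw [show [i', i] = i' :: [i] from rfl, rightInvSeq_cons,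
        CoxeterSystem.rightInvSeq_singleton, cs.wordProd_singleton, cs.inv_simple]
    rw [hris] at hmem
    rcases List.mem_cons.mp hmem with hc | hc
    · exact absurd hc.symm (braid_ne cs hSL hii' h3)
    · rw [List.mem_singleton] at hc
      exact absurd hc (simple_ne cs hSL (Ne.symm hii'))

end SimplyLaced2

lemma commMove_symm {x y : List B} (h : CommMove M x y) : CommMove M y x := by
  obtain ⟨l₁, l₂, a, b, hm, hx, hy⟩ := h
  exact ⟨l₁, l₂, b, a, by rw [M.symmetric b a]; exact hm, hy, hx⟩

lemma commMove_append {x y : List B} (c : List B) (h : CommMove M x y) :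
    CommMove M (x ++ c) (y ++ c) := by
  obtain ⟨l₁, l₂, a, b, hm, rfl, rfl⟩ := h
  exact ⟨l₁, l₂ ++ c, a, b, hm, by simp, by simp⟩

lemma rtg_append {x y : List B} (c : List B)
    (h : Relation.ReflTransGen (CommMove M) x y) :
    Relation.ReflTransGen (CommMove M) (x ++ c) (y ++ c) :=
  Relation.ReflTransGen.lift (fun l => l ++ c) (fun _ _ hab => commMove_append c hab) _ _ h

lemma commMove_perm {x y : List B} (h : CommMove M x y) : x.Perm y := by
  obtain ⟨l₁, l₂, a, b, _, rfl, rfl⟩ := h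
  rw [List.append_assoc, List.append_assoc]
  exact List.Perm.append_left l₁ (List.Perm.swap b a l₂)

lemma rtg_perm {x y : List B} (h : Relation.ReflTransGen (CommMove M) x y) : x.Perm y := by
  induction h with
  | refl => exact List.Perm.refl _
  | tail _ h2 ih => exact ih.trans (commMove_perm h2)

lemma sba_descend {w : W} (hw : ShortBraidAvoiding cs w) {i : B}
    (hi : ℓ (w * s i) < ℓ w) : ShortBraidAvoiding cs (w * s i) := by
  intro τ hτ hπτ hbr
  obtain ⟨l₁, l₂, a, b, hm, rfl⟩ := hbr
  obtain ⟨hlen', _⟩ := length_sub_one_of_descent cs hi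
  set τ := l₁ ++ [a, b, a] ++ l₂ with hτdef
  have hprod : π (τ ++ [i]) = w := by
    rw [cs.wordProd_append, cs.wordProd_singleton, hπτ,
      CoxeterSystem.simple_mul_simple_cancel_right]
  have hred : cs.IsReduced (τ ++ [i]) := by
    rw [CoxeterSystem.IsReduced, hprod]
    have h1 : τ.length = ℓ (w * s i) := by rw [← hτ, hπτ]
    simp only [List.length_append, List.length_cons, List.length_nil, h1]
    omega
  exact hw (τ ++ [i]) hred hprod ⟨l₁, l₂ ++ [i], a, b, hm, by simp [hτdef]⟩

section SimplyLaced3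

variable (hSL : ∀ a b : B, a ≠ b → M a b = 2 ∨ M a b = 3)

include hSL

lemma sba_to_fc_aux : ∀ n : ℕ, ∀ w : W, ℓ w = n → ShortBraidAvoiding cs w →
    ∀ α β : List B, cs.IsReduced α → π α = w → cs.IsReduced β → π β = w →
    Relation.ReflTransGen (CommMove M) α β := by
  intro n
  induction n using Nat.strong_induction_on with
  | _ n ih =>
  intro w hlw hsba α β hα hπα hβ hπβ
  rcases n with _ | n
  · have hα0 : α = [] := List.length_eq_zero_iff.mp (by rw [← hα, hπα, hlw])
    have hβ0 : β = [] := List.length_eq_zero_iff.mp (by rw [← hβ, hπβ, hlw])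
    rw [hα0, hβ0]
  · rcases List.eq_nil_or_concat α with rfl | ⟨α₀, i, rfl⟩
    · exfalso
      have : (0 : ℕ) = n + 1 := by
        rw [← hlw, ← hπα, cs.wordProd_nil, cs.length_one]
      omega
    rcases List.eq_nil_or_concat β with rfl | ⟨β₀, i', rfl⟩
    · exfalso
      have : (0 : ℕ) = n + 1 := by
        rw [← hlw, ← hπβ, cs.wordProd_nil, cs.length_one]
      omega
    simp only [List.concat_eq_append] at *
    -- basic facts for α
    have hπα₀s : π α₀ * s i = w := by
      rw [← hπα, cs.wordProd_append, cs.wordProd_singleton]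
    have hπα₀ : π α₀ = w * s i := by
      rw [← hπα₀s, CoxeterSystem.simple_mul_simple_cancel_right]
    have hα₀red : cs.IsReduced α₀ := by
      have h := hα.take α₀.length
      rwa [List.take_left] at h
    have hαlen : α₀.length + 1 = n + 1 := by
      have h := hα
      rw [CoxeterSystem.IsReduced, hπα, hlw] at h
      simpa using h.symm
    have hℓwsi : ℓ (w * s i) = n := by
      have h := hα₀red
      rw [CoxeterSystem.IsReduced, hπα₀] at h
      omega
    have hdesc : ℓ (w * s i) < ℓ w := by omega
    -- basic facts for β
    have hπβ₀s : π β₀ * s i' = w := by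
      rw [← hπβ, cs.wordProd_append, cs.wordProd_singleton]
    have hπβ₀ : π β₀ = w * s i' := by
      rw [← hπβ₀s, CoxeterSystem.simple_mul_simple_cancel_right]
    have hβ₀red : cs.IsReduced β₀ := by
      have h := hβ.take β₀.length
      rwa [List.take_left] at h
    have hβlen : β₀.length + 1 = n + 1 := by
      have h := hβ
      rw [CoxeterSystem.IsReduced, hπβ, hlw] at h
      simpa using h.symm
    have hℓwsi' : ℓ (w * s i') = n := by
      have h := hβ₀red
      rw [CoxeterSystem.IsReduced, hπβ₀] at h
      omega
    have hdesc' : ℓ (w * s i') < ℓ w := by omega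
    by_cases hii' : i = i'
    · subst hii'
      have h1 := ih n (by omega) (w * s i) hℓwsi (sba_descend cs hsba hdesc)
        α₀ β₀ hα₀red hπα₀ hβ₀red hπβ₀
      exact rtg_append [i] h1
    · rcases hSL i i' hii' with h2 | h3
      · -- commuting case
        have hcomm : s i * s i' = s i' * s i := by
          have hp : (s i * s i') ^ 2 = 1 := by
            rw [← h2]
            exact cs.simple_mul_simple_pow i i'
          have h4 : s i * s i' = (s i * s i')⁻¹ :=
            eq_inv_of_mul_eq_one_left (by rw [← pow_two]; exact hp)
          rw [h4, mul_inv_rev, cs.inv_simple, cs.inv_simple]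
        obtain ⟨ε, hredγ, hprodγ, hlenγ⟩ :=
          exists_reduced_word_ending_pair cs hSL hii' hdesc hdesc'
        have hprodε : π ε * s i' * s i = w := by
          rw [← hprodγ, cs.wordProd_append, cs.wordProd_cons, cs.wordProd_singleton, mul_assoc]
        have hprodγ' : π (ε ++ [i, i']) = w := by
          rw [cs.wordProd_append, cs.wordProd_cons, cs.wordProd_singleton, hcomm,
        ← mul_assoc]
          exact hprodε
        -- ε ++ [i'] is a reduced word for w * s i
        have hprod1 : π (ε ++ [i']) = w * s i := by
          rw [cs.wordProd_append, cs.wordProd_singleton, ← hprodε,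
            CoxeterSystem.simple_mul_simple_cancel_right]
        have hred1 : cs.IsReduced (ε ++ [i']) := by
          rw [CoxeterSystem.IsReduced, hprod1]
          simp only [List.length_append, List.length_cons, List.length_nil]
          omega
        -- ε ++ [i] is a reduced word for w * s i'
        have hprod2 : π (ε ++ [i]) = w * s i' := by
          have h5 : π (ε ++ [i]) * s i' = w := by
            rw [cs.wordProd_append, cs.wordProd_singleton, mul_assoc, hcomm, ← mul_assoc]
            exact hprodε
          rw [← h5, CoxeterSystem.simple_mul_simple_cancel_right]
        have hred2 : cs.IsReduced (ε ++ [i]) := by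
          rw [CoxeterSystem.IsReduced, hprod2]
          simp only [List.length_append, List.length_cons, List.length_nil]
          omega
        have c1 := ih n (by omega) (w * s i) hℓwsi (sba_descend cs hsba hdesc)
          α₀ (ε ++ [i']) hα₀red hπα₀ hred1 hprod1
        have c1' := rtg_append [i] c1
        simp only [List.append_assoc, List.singleton_append] at c1'
        have c2 := ih n (by omega) (w * s i') hℓwsi' (sba_descend cs hsba hdesc')
          β₀ (ε ++ [i]) hβ₀red hπβ₀ hred2 hprod2
        have c2' := rtg_append [i'] c2
        simp only [List.append_assoc, List.singleton_append] at c2'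
        have cmid : CommMove M (ε ++ [i, i']) (ε ++ [i', i]) :=
          ⟨ε, [], i, i', h2, by simp, by simp⟩
        have c2'' := c2'.tail cmid
        have hsymm : Std.Symm (Relation.ReflTransGen (CommMove M)) := by
          haveI : Std.Symm (CommMove M) := ⟨fun (x y : List B) (h : CommMove M x y) => commMove_symm h⟩
          infer_instance
        have hc2sym := hsymm.symm _ _ c2''
        exact c1'.trans hc2sym
      · -- short-braid case: contradiction with SBA
        exfalso
        obtain ⟨ε, hredb, hprodb⟩ :=
          exists_reduced_word_ending_braid cs hSL hii' h3 hdesc hdesc'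
        exact (hsba _ hredb hprodb) ⟨ε, [], i, i', by omega, by simp⟩

theorem fc_of_sba {w : W} (hsba : ShortBraidAvoiding cs w) : FullyCommutative cs w :=
  fun α β hα hπα hβ hπβ =>
    sba_to_fc_aux cs hSL (ℓ w) w rfl hsba α β hα hπα hβ hπβ

theorem sba_of_fc {w : W} (hfc : FullyCommutative cs w) : ShortBraidAvoiding cs w := by
  intro ω hred hπ hbr
  classical
  obtain ⟨l₁, l₂, a, b, hm, rfl⟩ := hbr
  have hab : a ≠ b := by
    intro h
    rw [h, M.diagonal b] at hm
    omega
  have hm3 : M a b = 3 := by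
    rcases hSL a b hab with h | h <;> omega
  have hmba : M b a = 3 := by rw [M.symmetric b a]; exact hm3
  -- the braid-moved word
  have hb1 : alternatingWord a b 3 = [b, a, b] := rfl
  have hb2 : alternatingWord b a 3 = [a, b, a] := rfl
  have hbraid : π [b, a, b] = π [a, b, a] := by
    have h := cs.wordProd_braidWord_eq a b
    have h' : π (alternatingWord a b (M a b)) = π (alternatingWord b a (M b a)) := h
    rwa [hm3, hmba, hb1, hb2] at h'
  set ω' := l₁ ++ [b, a, b] ++ l₂ with hω'
  have hπ' : π ω' = w := by
    rw [hω', ← hπ]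
    rw [cs.wordProd_append, cs.wordProd_append, cs.wordProd_append, cs.wordProd_append,
      hbraid]
  have hred' : cs.IsReduced ω' := by
    rw [CoxeterSystem.IsReduced, hπ', ← hπ]
    have := hred
    rw [CoxeterSystem.IsReduced] at this
    rw [this]
    simp [hω']
  have hrtg := hfc _ _ hred hπ hred' hπ'
  have hperm := rtg_perm hrtg
  have hcount := hperm.count_eq a
  rw [hω'] at hcount
  simp only [List.count_append, List.count_cons, List.count_nil] at hcount
  have hba : b ≠ a := fun h => hab h.symm
  simp [hab, hba] at hcount

end SimplyLaced3

end SB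

end SBDev

open DeodharMu in
theorem stmt8 (cs : CoxeterSystem M W) (w : W) :
    (FullyCommutative cs w →
      (∀ ω' : List B, (∃ ω : List B, cs.IsReduced ω ∧ cs.wordProd ω = w ∧
          Relation.ReflTransGen (CommMove M) ω ω') → ¬ HasShortBraid M ω') →
      ShortBraidAvoiding cs w) ∧
    ((∀ s t : B, s ≠ t → M s t = 2 ∨ M s t = 3) →
      (FullyCommutative cs w ↔ ShortBraidAvoiding cs w)) := by
  constructor
  · intro _ hyp ω hred hπ
    exact hyp ω ⟨ω, hred, hπ, Relation.ReflTransGen.refl⟩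
  · intro hSL
    exact ⟨fun hfc => SB.sba_of_fc cs hSL hfc, fun hsba => SB.fc_of_sba cs hSL hsba⟩
end

section
/- Let w = w_1...w_k be a reduced expression for a fully commutative element w of a Coxeter group, and define the heap partial order on {1,...,k} as the transitive closure of the relation i ⋖ j when i < j and w_i does not commute with w_j. If w' is another reduced expression for w, then the labeled posets (heaps) of w and w' are isomorphic as labeled posets. -/
open CoxeterSystem Polynomial

variable {B W : Type*} [Group W] {M : CoxeterMatrix B}

namespace DeodharMu

private lemma commute_simple_of_M_eq_two (cs : CoxeterSystem M W) {s t : B} (h : M s t = 2) :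
    Commute (cs.simple s) (cs.simple t) := by
  have h2 := cs.simple_mul_simple_pow s t
  rw [h, pow_two] at h2
  have h3 : cs.simple s * cs.simple t = (cs.simple s * cs.simple t)⁻¹ :=
    eq_inv_of_mul_eq_one_left h2
  rw [mul_inv_rev, inv_simple, inv_simple] at h3
  exact h3

private lemma getElem_mid {α : Type*} (l₁ l₂ : List α) (x y : α) (m : ℕ)
    (hm : m < (l₁ ++ [x, y] ++ l₂).length) :
    (l₁ ++ [x, y] ++ l₂)[m] =
      if h : m < l₁.length then l₁[m]
      else if h2 : m = l₁.length then x
      else if h3 : m = l₁.length + 1 then y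
      else l₂[m - (l₁.length + 2)]'(by simp at hm; omega) := by
  have hm' : m < (l₁ ++ [x, y] ++ l₂).length := hm
  simp only [List.length_append, List.length_cons, List.length_nil] at hm'
  rcases lt_or_ge m l₁.length with h | h
  · rw [dif_pos h]
    rw [List.getElem_append_left (by simp; omega : m < (l₁ ++ [x, y]).length),
      List.getElem_append_left h]
  · rw [dif_neg (by omega)]
    rcases Nat.lt_or_ge m (l₁.length + 2) with h2 | h2
    · rw [List.getElem_append_left (by simp; omega : m < (l₁ ++ [x, y]).length),
        List.getElem_append_right h]
      rcases Nat.lt_or_ge m (l₁.length + 1) with h3 | h3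
      · have hm0 : m - l₁.length = 0 := by omega
        have hmn : m = l₁.length := by omega
        simp [hm0, hmn]
      · have hm1 : m - l₁.length = 1 := by omega
        have hmn : m = l₁.length + 1 := by omega
        simp [hm1, hmn]
    · rw [List.getElem_append_right (by simp; omega : (l₁ ++ [x, y]).length ≤ m)]
      rw [dif_neg (by omega), dif_neg (by omega)]
      congr 1
      simp

private lemma heapLT_lift (cs : CoxeterSystem M W) {ω ω' : List B} (n : ℕ)
    (e : Fin ω.length ≃ Fin ω'.length)
    (hlab : ∀ i, ω'.get (e i) = ω.get i)
    (hval : ∀ i : Fin ω.length,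
      ((e i : ℕ) = if (i : ℕ) = n then n + 1 else if (i : ℕ) = n + 1 then n else (i : ℕ)))
    (hcomm : ∀ (h1 : n < ω.length) (h2 : n + 1 < ω.length),
      Commute (cs.simple (ω.get ⟨n, h1⟩)) (cs.simple (ω.get ⟨n + 1, h2⟩)))
    {i j : Fin ω.length} (h : HeapLT cs ω i j) : HeapLT cs ω' (e i) (e j) := by
  refine Relation.TransGen.lift e ?_ _ _ h
  rintro a b ⟨hab, hnc⟩
  refine ⟨?_, by rw [hlab, hlab]; exact hnc⟩
  rw [hval a, hval b]
  by_cases hA : (a : ℕ) = n ∧ (b : ℕ) = n + 1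
  · exfalso
    obtain ⟨ha, hb⟩ := hA
    apply hnc
    have ha' : a = ⟨n, ha ▸ a.isLt⟩ := Fin.ext ha
    have hb' : b = ⟨n + 1, hb ▸ b.isLt⟩ := Fin.ext hb
    rw [ha', hb']
    exact hcomm _ _
  · split_ifs <;> omega

private lemma heapEquiv_of_commMove (cs : CoxeterSystem M W) {ω ω' : List B}
    (hmv : ∃ (l₁ l₂ : List B) (s t : B), M s t = 2 ∧ ω = l₁ ++ [s, t] ++ l₂ ∧ ω' = l₁ ++ [t, s] ++ l₂) :
    ∃ e : Fin ω.length ≃ Fin ω'.length,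
      (∀ i, ω'.get (e i) = ω.get i) ∧
      (∀ i j, HeapLT cs ω i j ↔ HeapLT cs ω' (e i) (e j)) := by
  obtain ⟨l₁, l₂, s, t, hm, hω, hω'⟩ := hmv
  subst hω hω'
  have hk : (l₁ ++ [s, t] ++ l₂).length = (l₁ ++ [t, s] ++ l₂).length := by simp
  have hn1 : l₁.length + 1 < (l₁ ++ [s, t] ++ l₂).length := by simp
  have hn0 : l₁.length < (l₁ ++ [s, t] ++ l₂).length := by omega
  set e : Fin (l₁ ++ [s, t] ++ l₂).length ≃ Fin (l₁ ++ [t, s] ++ l₂).length :=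
    (Equiv.swap ⟨l₁.length, hn0⟩ ⟨l₁.length + 1, hn1⟩).trans (finCongr hk) with he
  have hval : ∀ i : Fin (l₁ ++ [s, t] ++ l₂).length,
      ((e i : ℕ) = if (i : ℕ) = l₁.length then l₁.length + 1
        else if (i : ℕ) = l₁.length + 1 then l₁.length else (i : ℕ)) := by
    intro i
    simp only [he, Equiv.trans_apply, finCongr_apply, Fin.coe_cast, Equiv.swap_apply_def,
      Fin.ext_iff]
    split_ifs <;> rfl
  have hval' : ∀ a : Fin (l₁ ++ [t, s] ++ l₂).length,
      ((e.symm a : ℕ) = if (a : ℕ) = l₁.length then l₁.length + 1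
        else if (a : ℕ) = l₁.length + 1 then l₁.length else (a : ℕ)) := by
    intro a
    have := hval (e.symm a)
    rw [e.apply_symm_apply] at this
    have hlt := (e.symm a).isLt
    split_ifs at this ⊢ <;> omega
  have hlab : ∀ i, (l₁ ++ [t, s] ++ l₂).get (e i) = (l₁ ++ [s, t] ++ l₂).get i := by
    intro i
    simp only [List.get_eq_getElem]
    rw [getElem_mid, getElem_mid]
    have h1 := hval i
    simp only [h1]
    rcases eq_or_ne ((i : ℕ)) l₁.length with hi | hi
    · simp [hi]
    rcases eq_or_ne ((i : ℕ)) (l₁.length + 1) with hi2 | hi2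
    · simp [hi, hi2]
    · simp only [if_neg hi, if_neg hi2]
      split_ifs <;> rfl
  have hlab' : ∀ a, (l₁ ++ [s, t] ++ l₂).get (e.symm a) = (l₁ ++ [t, s] ++ l₂).get a := by
    intro a
    conv_rhs => rw [← e.apply_symm_apply a]
    rw [hlab]
  have hc : Commute (cs.simple s) (cs.simple t) := commute_simple_of_M_eq_two cs hm
  have hgn : ∀ h, ((l₁ ++ [s, t] ++ l₂).get ⟨l₁.length, h⟩) = s := by
    intro h; simp only [List.get_eq_getElem]; rw [getElem_mid]; simp
  have hgn1 : ∀ h, ((l₁ ++ [s, t] ++ l₂).get ⟨l₁.length + 1, h⟩) = t := by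
    intro h; simp only [List.get_eq_getElem]; rw [getElem_mid]; simp
  have hgn' : ∀ h, ((l₁ ++ [t, s] ++ l₂).get ⟨l₁.length, h⟩) = t := by
    intro h; simp only [List.get_eq_getElem]; rw [getElem_mid]; simp
  have hgn1' : ∀ h, ((l₁ ++ [t, s] ++ l₂).get ⟨l₁.length + 1, h⟩) = s := by
    intro h; simp only [List.get_eq_getElem]; rw [getElem_mid]; simp
  refine ⟨e, hlab, fun i j => ⟨fun h => ?_, fun h => ?_⟩⟩
  · refine heapLT_lift cs l₁.length e hlab hval (fun h1 h2 => ?_) h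
    rw [hgn, hgn1]; exact hc
  · have := heapLT_lift cs l₁.length e.symm hlab' hval' (fun h1 h2 => ?_) h
    · rwa [e.symm_apply_apply, e.symm_apply_apply] at this
    · rw [hgn', hgn1']; exact hc.symm


private lemma heapEquiv_of_rtg (cs : CoxeterSystem M W) {ω ω' : List B}
    (h : Relation.ReflTransGen (CommMove M) ω ω') :
    ∃ e : Fin ω.length ≃ Fin ω'.length,
      (∀ i, ω'.get (e i) = ω.get i) ∧
      (∀ i j, HeapLT cs ω i j ↔ HeapLT cs ω' (e i) (e j)) := by
  induction h with
  | refl => exact ⟨Equiv.refl _, fun i => rfl, fun i j => Iff.rfl⟩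
  | tail h1 h2 ih =>
    obtain ⟨e₁, hl₁, hh₁⟩ := ih
    obtain ⟨e₂, hl₂, hh₂⟩ := heapEquiv_of_commMove cs h2
    exact ⟨e₁.trans e₂, fun i => by rw [Equiv.trans_apply, hl₂, hl₁],
      fun i j => (hh₁ i j).trans (hh₂ _ _)⟩

end DeodharMu


open DeodharMu in
theorem stmt9 (cs : CoxeterSystem M W) (w : W) (hfc : FullyCommutative cs w)
    (ω ω' : List B) (hred : cs.IsReduced ω) (hw : cs.wordProd ω = w)
    (hred' : cs.IsReduced ω') (hw' : cs.wordProd ω' = w) :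
    ∃ e : Fin ω.length ≃ Fin ω'.length,
      (∀ i : Fin ω.length, ω'.get (e i) = ω.get i) ∧
      (∀ i j : Fin ω.length, HeapLT cs ω i j ↔ HeapLT cs ω' (e i) (e j)) :=
  DeodharMu.heapEquiv_of_rtg cs (hfc ω ω' hred hw hred' hw')
end
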